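/- Let X and Y be random variables (possibly dependent) that are generalized Weibull-tail on ℝ with tail parameters β_x and β_y respectively, and suppose they satisfy the positive dependence condition: there is C > 0 with P(X ≥ 0 | Y ≥ z) ≥ C and P(X ≤ 0 | Y ≤ z) ≥ C for all z ∈ ℝ. Then X + Y is generalized Weibull-tail on ℝ with tail parameter min{β_x, β_y}. -/

import Mathlib

open MeasureTheory Filter Real Finset

noncomputable section

/-- A positive function `l` on `(0,∞)` is slowly varying if `l(tx)/l(x) → 1` as `x → ∞`
for every `t > 0`. -/
def SlowlyVarying (l : ℝ → ℝ) : Prop :=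
  (∀ x : ℝ, 0 < x → 0 < l x) ∧
    ∀ t : ℝ, 0 < t → Tendsto (fun x : ℝ => l (t * x) / l x) atTop (nhds 1)

/-- A positive function `r` is regularly varying with index `ρ` if `r(tx)/r(x) → t^ρ`. -/
def RegularlyVarying (r : ℝ → ℝ) (ρ : ℝ) : Prop :=
  (∀ᶠ x in atTop, 0 < r x) ∧
    ∀ t : ℝ, 0 < t → Tendsto (fun x : ℝ => r (t * x) / r x) atTop (nhds (t ^ ρ))

/-- Survival function `P(X ≥ x)`. -/
def survival {Ω : Type*} [MeasurableSpace Ω] (μ : Measure Ω) (X : Ω → ℝ) (x : ℝ) : ℝ :=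
  (μ {ω | x ≤ X ω}).toReal

/-- `X` is generalized Weibull-tail on `ℝ₊` with tail parameter `β`:
its survival function is sandwiched between Weibull-tail functions with parameter `β`
for `x` large enough. -/
def GWTpos {Ω : Type*} [MeasurableSpace Ω] (μ : Measure Ω) (X : Ω → ℝ) (β : ℝ) : Prop :=
  ∃ l₁ l₂ : ℝ → ℝ, SlowlyVarying l₁ ∧ SlowlyVarying l₂ ∧
    ∀ᶠ x in atTop, Real.exp (-(x ^ β * l₁ x)) ≤ survival μ X x ∧
      survival μ X x ≤ Real.exp (-(x ^ β * l₂ x))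

/-- `X` is generalized Weibull-tail on `ℝ` with tail parameter `β`: both its right tail
`P(X ≥ x)` and its left tail `P(X ≤ -x) = P(-X ≥ x)` are sandwiched between
Weibull-tail functions with parameter `β`. -/
def GWTreal {Ω : Type*} [MeasurableSpace Ω] (μ : Measure Ω) (X : Ω → ℝ) (β : ℝ) : Prop :=
  GWTpos μ X β ∧ GWTpos μ (fun ω => -X ω) β

/-- `X` is Weibull-tail on `ℝ₊` with tail parameter `β`: `P(X ≥ x) = exp (-x^β l(x))`
for `x > 0`, with `l` slowly varying. -/
def WTpos {Ω : Type*} [MeasurableSpace Ω] (μ : Measure Ω) (X : Ω → ℝ) (β : ℝ) : Prop :=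
  ∃ l : ℝ → ℝ, SlowlyVarying l ∧ ∀ x : ℝ, 0 < x →
    survival μ X x = Real.exp (-(x ^ β * l x))

/-- `X` is Weibull-tail on `ℝ` with tail parameter `β`: both tails are Weibull-tail. -/
def WTreal {Ω : Type*} [MeasurableSpace Ω] (μ : Measure Ω) (X : Ω → ℝ) (β : ℝ) : Prop :=
  WTpos μ X β ∧ WTpos μ (fun ω => -X ω) β

/-- `X` is symmetric: `X` and `-X` have the same distribution. -/
def SymmetricRV {Ω : Type*} [MeasurableSpace Ω] (μ : Measure Ω) (X : Ω → ℝ) : Prop :=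
  Measure.map X μ = Measure.map (fun ω => -X ω) μ

namespace GWTwork

variable {Ω : Type*} [MeasurableSpace Ω]

lemma surv_nonneg (μ : Measure Ω) (X : Ω → ℝ) (x : ℝ) : 0 ≤ survival μ X x :=
  ENNReal.toReal_nonneg

lemma surv_antitone (μ : Measure Ω) [IsProbabilityMeasure μ] (X : Ω → ℝ) :
    Antitone (survival μ X) := by
  intro a b hab
  exact ENNReal.toReal_mono (measure_ne_top μ _) (measure_mono fun ω h => hab.trans h)

lemma surv_le_one (μ : Measure Ω) [IsProbabilityMeasure μ] (X : Ω → ℝ) (x : ℝ) :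
    survival μ X x ≤ 1 := by
  have h := prob_le_one (μ := μ) (s := {ω | x ≤ X ω})
  have := ENNReal.toReal_mono (by simp) h
  simpa [survival] using this

lemma exists_dyadic (x₀ x : ℝ) (h₀ : 0 < x₀) (hx : x₀ ≤ x) :
    ∃ m : ℕ, 2 ^ m * x₀ ≤ x ∧ x < 2 ^ (m + 1) * x₀ := by
  have h1 : ∃ n : ℕ, x / x₀ < 2 ^ n := pow_unbounded_of_one_lt _ one_lt_two
  classical
  let n := Nat.find h1
  have hn : x / x₀ < 2 ^ n := Nat.find_spec h1
  have hq1 : (1:ℝ) ≤ x / x₀ := (one_le_div h₀).mpr hx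
  have hn0 : n ≠ 0 := by
    intro h0
    rw [h0] at hn; simp at hn; linarith
  obtain ⟨m, hm⟩ : ∃ m, n = m + 1 := ⟨n - 1, (Nat.succ_pred_eq_of_pos (Nat.pos_of_ne_zero hn0)).symm⟩
  have hmin : ¬ (x / x₀ < 2 ^ m) := Nat.find_min h1 (by omega)
  push_neg at hmin
  refine ⟨m, ?_, ?_⟩
  · rw [← le_div_iff₀ h₀]; exact hmin
  · rw [← div_lt_iff₀ h₀, ← hm]; exact hn

lemma pow_two_rpow (m : ℕ) (c : ℝ) : ((2:ℝ) ^ m) ^ c = ((2:ℝ) ^ c) ^ m := by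
  rw [← Real.rpow_natCast (2:ℝ) m, ← Real.rpow_mul (by norm_num), mul_comm,
    Real.rpow_mul (by norm_num), Real.rpow_natCast]


lemma P1 (μ : Measure Ω) [IsProbabilityMeasure μ] (Z : Ω → ℝ) (β : ℝ)
    (hg : GWTpos μ Z β) (ε : ℝ) (hε : 0 < ε) (hεβ : ε < β) :
    ∀ᶠ x in atTop, survival μ Z x ≤ Real.exp (-(x ^ (β - ε))) := by
  obtain ⟨l₁, l₂, hl₁, hl₂, hev⟩ := hg
  set r : ℝ := (2:ℝ) ^ (-(ε/2)) with hr_def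
  have hr0 : 0 < r := Real.rpow_pos_of_pos two_pos _
  have hr1 : r < 1 := Real.rpow_lt_one_of_one_lt_of_neg one_lt_two (by linarith)
  have hratio : ∀ᶠ x in atTop, r < l₂ (2*x) / l₂ x :=
    (hl₂.2 2 two_pos).eventually (eventually_gt_nhds hr1)
  obtain ⟨x₀', hx₀'⟩ := eventually_atTop.mp (hratio.and hev)
  set x₀ : ℝ := max x₀' 1 with hx₀def
  have hx₀pos : (0:ℝ) < x₀ := lt_of_lt_of_le one_pos (le_max_right _ _)
  have hbase : ∀ x, x₀ ≤ x →
      r * l₂ x ≤ l₂ (2*x) ∧ survival μ Z x ≤ Real.exp (-(x ^ β * l₂ x)) := by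
    intro x hx
    have h := hx₀' x (le_trans (le_max_left _ _) hx)
    have hxpos : 0 < x := lt_of_lt_of_le hx₀pos hx
    refine ⟨?_, h.2.2⟩
    have hl₂x : 0 < l₂ x := hl₂.1 x hxpos
    have h1 := h.1
    rw [lt_div_iff₀ hl₂x] at h1
    linarith
  have hpow_ge : ∀ m : ℕ, x₀ ≤ 2 ^ m * x₀ := by
    intro m
    exact le_mul_of_one_le_left hx₀pos.le (one_le_pow₀ one_le_two)
  have hind : ∀ m : ℕ, r ^ m * l₂ x₀ ≤ l₂ (2 ^ m * x₀) := by
    intro m; induction m with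
    | zero => simp
    | succ n ih =>
      have hstep := (hbase _ (hpow_ge n)).1
      have h1 : r * (r ^ n * l₂ x₀) ≤ r * l₂ (2 ^ n * x₀) :=
        mul_le_mul_of_nonneg_left ih hr0.le
      calc r ^ (n+1) * l₂ x₀ = r * (r ^ n * l₂ x₀) := by ring
        _ ≤ r * l₂ (2 ^ n * x₀) := h1
        _ ≤ l₂ (2 * (2 ^ n * x₀)) := hstep
        _ = l₂ (2 ^ (n+1) * x₀) := by rw [pow_succ]; ring_nf
  set q : ℝ := (2:ℝ) ^ (ε/2) with hq_def
  have hq : 1 < q := by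
    rw [hq_def, one_lt_rpow_iff_of_pos two_pos]
    exact Or.inl ⟨one_lt_two, by linarith⟩
  set K : ℝ := x₀ ^ ε * l₂ x₀ with hK_def
  have hKpos : 0 < K := mul_pos (Real.rpow_pos_of_pos hx₀pos ε) (hl₂.1 x₀ hx₀pos)
  have hMtend : ∀ᶠ m : ℕ in atTop, (2:ℝ) ^ (β - ε) ≤ q ^ m * K :=
    ((tendsto_pow_atTop_atTop_of_one_lt hq).atTop_mul_const hKpos).eventually_ge_atTop _
  obtain ⟨M, hM⟩ := eventually_atTop.mp hMtend
  rw [eventually_atTop]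
  refine ⟨2 ^ (M+1) * x₀, fun x hx => ?_⟩
  have hxx₀ : x₀ ≤ x := le_trans (hpow_ge (M+1)) hx
  have hxpos : 0 < x := lt_of_lt_of_le hx₀pos hxx₀
  obtain ⟨m, hm1, hm2⟩ := exists_dyadic x₀ x hx₀pos hxx₀
  have hmM : M ≤ m := by
    have h2 : (2:ℝ) ^ (M+1) * x₀ < 2 ^ (m+1) * x₀ := lt_of_le_of_lt hx hm2
    have h3 : (2:ℝ) ^ (M+1) < 2 ^ (m+1) := by
      have := (mul_lt_mul_iff_left₀ hx₀pos).mp h2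
      exact this
    have := (pow_lt_pow_iff_right₀ one_lt_two).mp h3
    omega
  set y : ℝ := 2 ^ m * x₀ with hy_def
  have hypos : 0 < y := by positivity
  have hs1 : survival μ Z x ≤ survival μ Z y := surv_antitone μ Z hm1
  have hs2 := (hbase y (hpow_ge m)).2
  -- exponent comparison:  x^(β-ε) ≤ y^β * l₂ y
  have hexp : x ^ (β - ε) ≤ y ^ β * l₂ y := by
    have h1 : x ^ (β - ε) ≤ (2 * y) ^ (β - ε) := by
      apply Real.rpow_le_rpow hxpos.le _ (by linarith)
      rw [hy_def, ← mul_assoc, ← pow_succ']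
      exact hm2.le
    have h2 : (2 * y) ^ (β - ε) = 2 ^ (β - ε) * y ^ (β - ε) :=
      Real.mul_rpow (by norm_num) hypos.le
    have h3 : y ^ β = y ^ (β - ε) * y ^ ε := by
      rw [← Real.rpow_add hypos]; ring_nf
    have hyrpos : 0 < y ^ (β - ε) := Real.rpow_pos_of_pos hypos _
    -- key: 2^(β-ε) ≤ y^ε * (r^m * l₂ x₀)
    have hkey : (2:ℝ) ^ (β - ε) ≤ y ^ ε * (r ^ m * l₂ x₀) := by
      have hy_eps : y ^ ε = q ^ m * x₀ ^ ε / r ^ m := by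
        rw [hy_def, Real.mul_rpow (by positivity) hx₀pos.le, pow_two_rpow]
        rw [eq_div_iff (by positivity)]
        have hqr : (2:ℝ) ^ ε * r = q := by
          rw [hq_def, hr_def, ← Real.rpow_add two_pos]; ring_nf
        calc ((2:ℝ) ^ ε) ^ m * x₀ ^ ε * r ^ m
            = ((2:ℝ) ^ ε * r) ^ m * x₀ ^ ε := by rw [mul_pow]; ring
          _ = q ^ m * x₀ ^ ε := by rw [hqr]
      rw [hy_eps]
      have hrm : (0:ℝ) < r ^ m := by positivity
      have heq : q ^ m * x₀ ^ ε / r ^ m * (r ^ m * l₂ x₀) = q ^ m * K := by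
        field_simp [hK_def]; ring
      rw [heq]
      exact hM m hmM
    have hl2y : r ^ m * l₂ x₀ ≤ l₂ y := hind m
    calc x ^ (β-ε) ≤ 2 ^ (β-ε) * y ^ (β-ε) := h2 ▸ h1
      _ ≤ y ^ (β-ε) * (y ^ ε * (r ^ m * l₂ x₀)) := by nlinarith
      _ ≤ y ^ (β-ε) * (y ^ ε * l₂ y) := by
          have hyeps : 0 < y ^ ε := Real.rpow_pos_of_pos hypos _
          have : y ^ ε * (r ^ m * l₂ x₀) ≤ y ^ ε * l₂ y :=
            mul_le_mul_of_nonneg_left hl2y hyeps.le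
          nlinarith
      _ = y ^ β * l₂ y := by rw [h3]; ring
  calc survival μ Z x ≤ survival μ Z y := hs1
    _ ≤ Real.exp (-(y ^ β * l₂ y)) := hs2
    _ ≤ Real.exp (-(x ^ (β - ε))) := by rw [Real.exp_le_exp]; linarith


lemma P2 (μ : Measure Ω) [IsProbabilityMeasure μ] (Z : Ω → ℝ) (β : ℝ) (hβ : 0 < β)
    (hg : GWTpos μ Z β) (ε : ℝ) (hε : 0 < ε) :
    ∀ᶠ x in atTop, Real.exp (-(x ^ (β + ε))) ≤ survival μ Z x := by
  obtain ⟨l₁, l₂, hl₁, hl₂, hev⟩ := hg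
  set q : ℝ := (2:ℝ) ^ (ε/2) with hq_def
  have hq0 : 0 < q := Real.rpow_pos_of_pos two_pos _
  have hq1 : 1 < q := by
    rw [hq_def, one_lt_rpow_iff_of_pos two_pos]
    exact Or.inl ⟨one_lt_two, by linarith⟩
  have hratio : ∀ᶠ x in atTop, l₁ (2*x) / l₁ x < q :=
    (hl₁.2 2 two_pos).eventually (eventually_lt_nhds hq1)
  obtain ⟨x₀', hx₀'⟩ := eventually_atTop.mp (hratio.and hev)
  set x₀ : ℝ := max x₀' 1 with hx₀def
  have hx₀pos : (0:ℝ) < x₀ := lt_of_lt_of_le one_pos (le_max_right _ _)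
  have hbase : ∀ x, x₀ ≤ x →
      l₁ (2*x) ≤ q * l₁ x ∧ Real.exp (-(x ^ β * l₁ x)) ≤ survival μ Z x := by
    intro x hx
    have h := hx₀' x (le_trans (le_max_left _ _) hx)
    have hxpos : 0 < x := lt_of_lt_of_le hx₀pos hx
    refine ⟨?_, h.2.1⟩
    have hl₁x : 0 < l₁ x := hl₁.1 x hxpos
    have h1 := h.1
    rw [div_lt_iff₀ hl₁x] at h1
    linarith
  have hpow_ge : ∀ m : ℕ, x₀ ≤ 2 ^ m * x₀ := by
    intro m
    exact le_mul_of_one_le_left hx₀pos.le (one_le_pow₀ one_le_two)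
  have hind : ∀ m : ℕ, l₁ (2 ^ m * x₀) ≤ q ^ m * l₁ x₀ := by
    intro m; induction m with
    | zero => simp
    | succ n ih =>
      have hstep := (hbase _ (hpow_ge n)).1
      calc l₁ (2 ^ (n+1) * x₀) = l₁ (2 * (2 ^ n * x₀)) := by rw [pow_succ]; ring_nf
        _ ≤ q * l₁ (2 ^ n * x₀) := hstep
        _ ≤ q * (q ^ n * l₁ x₀) := mul_le_mul_of_nonneg_left ih hq0.le
        _ = q ^ (n+1) * l₁ x₀ := by ring
  set T : ℝ := (2:ℝ) ^ β * q * l₁ x₀ / x₀ ^ ε with hT_def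
  have hMtend : ∀ᶠ m : ℕ in atTop, T ≤ q ^ m :=
    (tendsto_pow_atTop_atTop_of_one_lt hq1).eventually_ge_atTop _
  obtain ⟨M, hM⟩ := eventually_atTop.mp hMtend
  rw [eventually_atTop]
  refine ⟨2 ^ M * x₀, fun x hx => ?_⟩
  have hxx₀ : x₀ ≤ x := le_trans (hpow_ge M) hx
  have hxpos : 0 < x := lt_of_lt_of_le hx₀pos hxx₀
  obtain ⟨m, hm1, hm2⟩ := exists_dyadic x₀ x hx₀pos hxx₀
  have hmM : M ≤ m := by
    have h2 : (2:ℝ) ^ M * x₀ < 2 ^ (m+1) * x₀ := lt_of_le_of_lt hx hm2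
    have h3 : (2:ℝ) ^ M < 2 ^ (m+1) := (mul_lt_mul_iff_left₀ hx₀pos).mp h2
    have := (pow_lt_pow_iff_right₀ one_lt_two).mp h3
    omega
  set y : ℝ := 2 ^ m * x₀ with hy_def
  have hypos : 0 < y := by positivity
  set y2 : ℝ := 2 ^ (m+1) * x₀ with hy2_def
  have hy2pos : 0 < y2 := by positivity
  have hy2y : y2 = 2 * y := by rw [hy2_def, hy_def, pow_succ]; ring
  have hs1 : survival μ Z y2 ≤ survival μ Z x := surv_antitone μ Z hm2.le
  have hs2 := (hbase y2 (hpow_ge (m+1))).2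
  have hexp : y2 ^ β * l₁ y2 ≤ x ^ (β + ε) := by
    have hxy : y ^ (β + ε) ≤ x ^ (β + ε) :=
      Real.rpow_le_rpow hypos.le hm1 (by linarith)
    have hl1y2 : l₁ y2 ≤ q ^ (m+1) * l₁ x₀ := hind (m+1)
    have h2 : y2 ^ β = 2 ^ β * y ^ β := by
      rw [hy2y, Real.mul_rpow (by norm_num) hypos.le]
    have h3 : y ^ (β + ε) = y ^ β * y ^ ε := Real.rpow_add hypos _ _
    have hybpos : 0 < y ^ β := Real.rpow_pos_of_pos hypos _
    have hyeps : y ^ ε = q ^ m * q ^ m * x₀ ^ ε := by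
      rw [hy_def, Real.mul_rpow (by positivity) hx₀pos.le, pow_two_rpow]
      congr 2
      rw [← mul_pow]
      congr 1
      rw [hq_def, ← Real.rpow_add two_pos]; ring_nf
    -- key: 2^β * (q^(m+1) * l₁ x₀) ≤ y^ε
    have hkey : (2:ℝ) ^ β * (q ^ (m+1) * l₁ x₀) ≤ y ^ ε := by
      rw [hyeps]
      have hqm : T ≤ q ^ m := hM m hmM
      have hqm1 : (1:ℝ) ≤ q ^ m := one_le_pow₀ hq1.le
      have hxe : (0:ℝ) < x₀ ^ ε := Real.rpow_pos_of_pos hx₀pos _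
      have hTle : (2:ℝ) ^ β * q * l₁ x₀ ≤ q ^ m * x₀ ^ ε := by
        rw [hT_def] at hqm
        rw [div_le_iff₀ hxe] at hqm
        linarith
      have h2b : (0:ℝ) < (2:ℝ) ^ β := Real.rpow_pos_of_pos two_pos _
      have hl₁x₀ : 0 < l₁ x₀ := hl₁.1 x₀ hx₀pos
      calc (2:ℝ) ^ β * (q ^ (m+1) * l₁ x₀) = (2 ^ β * q * l₁ x₀) * q ^ m := by ring
        _ ≤ (q ^ m * x₀ ^ ε) * q ^ m := by nlinarith
        _ = q ^ m * q ^ m * x₀ ^ ε := by ring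
    have hl1y2pos' : 0 ≤ l₁ y2 := (hl₁.1 y2 hy2pos).le
    calc y2 ^ β * l₁ y2 ≤ y2 ^ β * (q ^ (m+1) * l₁ x₀) := by
          have := Real.rpow_pos_of_pos hy2pos β
          exact mul_le_mul_of_nonneg_left hl1y2 this.le
      _ = y ^ β * (2 ^ β * (q ^ (m+1) * l₁ x₀)) := by rw [h2]; ring
      _ ≤ y ^ β * y ^ ε := mul_le_mul_of_nonneg_left hkey hybpos.le
      _ = y ^ (β + ε) := h3.symm
      _ ≤ x ^ (β + ε) := hxy
  calc Real.exp (-(x ^ (β+ε))) ≤ Real.exp (-(y2 ^ β * l₁ y2)) := by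
        rw [Real.exp_le_exp]; linarith
    _ ≤ survival μ Z y2 := hs2
    _ ≤ survival μ Z x := hs1


variable {μ : Measure Ω} [IsProbabilityMeasure μ]

lemma surv_sum_le (X Y : Ω → ℝ) (x : ℝ) :
    survival μ (fun ω => X ω + Y ω) x ≤ survival μ X (x/2) + survival μ Y (x/2) := by
  have hsub : {ω | x ≤ X ω + Y ω} ⊆ {ω | x/2 ≤ X ω} ∪ {ω | x/2 ≤ Y ω} := by
    intro ω hω
    simp only [Set.mem_setOf_eq] at hω
    simp only [Set.mem_union, Set.mem_setOf_eq]
    by_contra hc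
    push_neg at hc
    linarith [hc.1, hc.2]
  calc survival μ (fun ω => X ω + Y ω) x
      ≤ (μ {ω | x/2 ≤ X ω} + μ {ω | x/2 ≤ Y ω}).toReal :=
        ENNReal.toReal_mono (ENNReal.add_ne_top.mpr ⟨measure_ne_top μ _, measure_ne_top μ _⟩)
          ((measure_mono hsub).trans (measure_union_le _ _))
    _ = survival μ X (x/2) + survival μ Y (x/2) :=
        ENNReal.toReal_add (measure_ne_top μ _) (measure_ne_top μ _)

lemma surv_pd_lower (X Y : Ω → ℝ) (C : ℝ)
    (hPD1 : ∀ z : ℝ, C * (μ {ω | z ≤ Y ω}).toReal ≤ (μ {ω | 0 ≤ X ω ∧ z ≤ Y ω}).toReal)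
    (x : ℝ) : C * survival μ Y x ≤ survival μ (fun ω => X ω + Y ω) x := by
  refine (hPD1 x).trans ?_
  refine ENNReal.toReal_mono (measure_ne_top μ _) (measure_mono ?_)
  intro ω hω
  simp only [Set.mem_setOf_eq] at *
  linarith [hω.1, hω.2]

lemma surv_diff_lower (X Y : Ω → ℝ) (x : ℝ) :
    survival μ X (2*x) ≤ survival μ (fun ω => X ω + Y ω) x + survival μ (fun ω => -Y ω) x := by
  have hsub : {ω | 2*x ≤ X ω} ⊆ {ω | x ≤ X ω + Y ω} ∪ {ω | x ≤ -Y ω} := by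
    intro ω hω
    simp only [Set.mem_setOf_eq] at hω
    simp only [Set.mem_union, Set.mem_setOf_eq]
    by_cases hY : x ≤ -Y ω
    · exact Or.inr hY
    · push_neg at hY
      exact Or.inl (by linarith)
  calc survival μ X (2*x)
      ≤ (μ {ω | x ≤ X ω + Y ω} + μ {ω | x ≤ -Y ω}).toReal :=
        ENNReal.toReal_mono (ENNReal.add_ne_top.mpr ⟨measure_ne_top μ _, measure_ne_top μ _⟩)
          ((measure_mono hsub).trans (measure_union_le _ _))
    _ = _ := ENNReal.toReal_add (measure_ne_top μ _) (measure_ne_top μ _)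

lemma sumUpper (X Y : Ω → ℝ) (βx βy : ℝ) (hβx : 0 < βx) (hβy : 0 < βy)
    (hXr : GWTpos μ X βx) (hYr : GWTpos μ Y βy) (ε : ℝ) (hε : 0 < ε)
    (hεβ : ε < min βx βy) :
    ∀ᶠ x in atTop, survival μ (fun ω => X ω + Y ω) x
      ≤ Real.exp (-(x ^ (min βx βy - ε))) := by
  set β := min βx βy with hβ_def
  have hβpos : 0 < β := lt_min hβx hβy
  have htend : Tendsto (fun x : ℝ => x / 2) atTop atTop :=
    tendsto_id.atTop_div_const two_pos
  have E1 : ∀ᶠ x : ℝ in atTop, survival μ X (x/2) ≤ Real.exp (-((x/2) ^ (βx - ε/2))) :=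
    htend.eventually (P1 μ X βx hXr (ε/2) (by linarith) (by have := min_le_left βx βy; linarith))
  have E2 : ∀ᶠ x : ℝ in atTop, survival μ Y (x/2) ≤ Real.exp (-((x/2) ^ (βy - ε/2))) :=
    htend.eventually (P1 μ Y βy hYr (ε/2) (by linarith) (by have := min_le_right βx βy; linarith))
  have E3 : ∀ᶠ x : ℝ in atTop, (2:ℝ) ≤ x := eventually_ge_atTop 2
  have E4 : ∀ᶠ x : ℝ in atTop, (2:ℝ) ^ (β - ε/2) * (1 + Real.log 2) ≤ x ^ (ε/2) :=
    (tendsto_rpow_atTop (by linarith : (0:ℝ) < ε/2)).eventually_ge_atTop _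
  filter_upwards [E1, E2, E3, E4] with x h1 h2 h3 h4
  have hxpos : (0:ℝ) < x := by linarith
  have hx1 : (1:ℝ) ≤ x := by linarith
  have hx2 : (1:ℝ) ≤ x / 2 := by linarith
  have hA : (x/2) ^ (β - ε/2) ≤ (x/2) ^ (βx - ε/2) :=
    Real.rpow_le_rpow_of_exponent_le hx2 (by have := min_le_left βx βy; linarith)
  have hB : (x/2) ^ (β - ε/2) ≤ (x/2) ^ (βy - ε/2) :=
    Real.rpow_le_rpow_of_exponent_le hx2 (by have := min_le_right βx βy; linarith)
  have hgap : x ^ (β - ε) + Real.log 2 ≤ (x/2) ^ (β - ε/2) := by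
    have hd : (x/2) ^ (β - ε/2) = x ^ (β - ε) * x ^ (ε/2) / 2 ^ (β - ε/2) := by
      rw [Real.div_rpow hxpos.le (by norm_num), ← Real.rpow_add hxpos]
      ring_nf
    have hxbe : (1:ℝ) ≤ x ^ (β - ε) := by
      rw [show (1:ℝ) = 1 ^ (β - ε) by simp [Real.one_rpow]]
      exact Real.rpow_le_rpow (by norm_num) hx1 (by linarith)
    have h2p : (0:ℝ) < 2 ^ (β - ε/2) := Real.rpow_pos_of_pos two_pos _
    rw [hd]
    have hfrac : 1 + Real.log 2 ≤ x ^ (ε/2) / 2 ^ (β - ε/2) := by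
      rw [le_div_iff₀ h2p]; linarith [h4]
    have : x ^ (β - ε) * (1 + Real.log 2) ≤ x ^ (β - ε) * (x ^ (ε/2) / 2 ^ (β - ε/2)) :=
      mul_le_mul_of_nonneg_left hfrac (by linarith)
    have hlog2 : (0:ℝ) < Real.log 2 := Real.log_pos one_lt_two
    rw [mul_div_assoc]
    nlinarith [this, hxbe, hlog2]
  calc survival μ (fun ω => X ω + Y ω) x
      ≤ survival μ X (x/2) + survival μ Y (x/2) := surv_sum_le X Y x
    _ ≤ Real.exp (-((x/2) ^ (βx - ε/2))) + Real.exp (-((x/2) ^ (βy - ε/2))) := by linarith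
    _ ≤ Real.exp (-((x/2) ^ (β - ε/2))) + Real.exp (-((x/2) ^ (β - ε/2))) := by
        have := Real.exp_le_exp.mpr (neg_le_neg hA)
        have := Real.exp_le_exp.mpr (neg_le_neg hB)
        linarith
    _ = Real.exp (Real.log 2 + -((x/2) ^ (β - ε/2))) := by
        rw [Real.exp_add, Real.exp_log two_pos]; ring
    _ ≤ Real.exp (-(x ^ (β - ε))) := by
        rw [Real.exp_le_exp]; linarith


lemma sumLowerPD (X Y : Ω → ℝ) (βy : ℝ) (hβy : 0 < βy)
    (hYr : GWTpos μ Y βy) (C : ℝ) (hC : 0 < C)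
    (hPD1 : ∀ z : ℝ, C * (μ {ω | z ≤ Y ω}).toReal ≤ (μ {ω | 0 ≤ X ω ∧ z ≤ Y ω}).toReal)
    (ε : ℝ) (hε : 0 < ε) :
    ∀ᶠ x in atTop, Real.exp (-(x ^ (βy + ε))) ≤ survival μ (fun ω => X ω + Y ω) x := by
  have E1 := P2 μ Y βy hβy hYr (ε/2) (by linarith)
  have E2 : ∀ᶠ x : ℝ in atTop, 1 - Real.log C ≤ x ^ (ε/2) :=
    (tendsto_rpow_atTop (by linarith : (0:ℝ) < ε/2)).eventually_ge_atTop _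
  have E3 : ∀ᶠ x : ℝ in atTop, (1:ℝ) ≤ x := eventually_ge_atTop 1
  filter_upwards [E1, E2, E3] with x h1 h2 h3
  have hxpos : (0:ℝ) < x := by linarith
  have hchain : C * survival μ Y x ≤ survival μ (fun ω => X ω + Y ω) x :=
    surv_pd_lower X Y C hPD1 x
  have hCexp : Real.exp (-(x ^ (βy + ε))) ≤ C * Real.exp (-(x ^ (βy + ε/2))) := by
    rw [show C * Real.exp (-(x ^ (βy + ε/2))) = Real.exp (Real.log C + -(x ^ (βy + ε/2))) by
      rw [Real.exp_add, Real.exp_log hC]]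
    rw [Real.exp_le_exp]
    have hsplit : x ^ (βy + ε) = x ^ (βy + ε/2) * x ^ (ε/2) := by
      rw [← Real.rpow_add hxpos]; ring_nf
    have hpow1 : (1:ℝ) ≤ x ^ (βy + ε/2) := by
      rw [show (1:ℝ) = 1 ^ (βy + ε/2) by simp [Real.one_rpow]]
      exact Real.rpow_le_rpow (by norm_num) h3 (by linarith)
    have hq1 : (1:ℝ) ≤ x ^ (ε/2) := by
      rw [show (1:ℝ) = 1 ^ (ε/2) by simp [Real.one_rpow]]
      exact Real.rpow_le_rpow (by norm_num) h3 (by linarith)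
    nlinarith [hsplit, h2, hpow1, hq1, mul_nonneg (sub_nonneg.mpr hpow1) (sub_nonneg.mpr hq1)]
  have hmul : C * Real.exp (-(x ^ (βy + ε/2))) ≤ C * survival μ Y x :=
    mul_le_mul_of_nonneg_left h1 hC.le
  linarith

lemma sumLowerDiff (X Y : Ω → ℝ) (βx βy : ℝ) (hβx : 0 < βx) (hβy : 0 < βy)
    (hXr : GWTpos μ X βx) (hYl : GWTpos μ (fun ω => -Y ω) βy)
    (hlt : βx < βy) (ε : ℝ) (hε : 0 < ε) (hεb : ε < (βy - βx)/2) :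
    ∀ᶠ x in atTop, Real.exp (-(x ^ (βx + ε))) ≤ survival μ (fun ω => X ω + Y ω) x := by
  have htend2 : Tendsto (fun x : ℝ => 2 * x) atTop atTop :=
    tendsto_id.const_mul_atTop two_pos
  have E1 : ∀ᶠ x : ℝ in atTop,
      Real.exp (-((2*x) ^ (βx + ε/4))) ≤ survival μ X (2*x) :=
    htend2.eventually (P2 μ X βx hβx hXr (ε/4) (by linarith))
  have E2 : ∀ᶠ x : ℝ in atTop,
      survival μ (fun ω => -Y ω) x ≤ Real.exp (-(x ^ (βy - ε/4))) :=
    P1 μ (fun ω => -Y ω) βy hYl (ε/4) (by linarith) (by linarith)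
  have E3 : ∀ᶠ x : ℝ in atTop, (1:ℝ) ≤ x := eventually_ge_atTop 1
  have E4 : ∀ᶠ x : ℝ in atTop, (2:ℝ) ^ (βx + ε/4) ≤ x ^ (ε/4) :=
    (tendsto_rpow_atTop (by linarith : (0:ℝ) < ε/4)).eventually_ge_atTop _
  have E5 : ∀ᶠ x : ℝ in atTop, 1 + Real.log 2 ≤ x ^ (ε/2) :=
    (tendsto_rpow_atTop (by linarith : (0:ℝ) < ε/2)).eventually_ge_atTop _
  filter_upwards [E1, E2, E3, E4, E5] with x h1 h2 h3 h4 h5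
  have hxpos : (0:ℝ) < x := by linarith
  set a : ℝ := x ^ (βx + ε/2) with ha_def
  set c : ℝ := x ^ (βx + ε) with hc_def
  set b : ℝ := x ^ (βy - ε/4) with hb_def
  -- (2x)^(βx+ε/4) ≤ a
  have hstep1 : (2*x) ^ (βx + ε/4) ≤ a := by
    rw [Real.mul_rpow (by norm_num) hxpos.le, ha_def]
    have : x ^ (βx + ε/2) = x ^ (ε/4) * x ^ (βx + ε/4) := by
      rw [← Real.rpow_add hxpos]; ring_nf
    rw [this]
    have hxp : (0:ℝ) < x ^ (βx + ε/4) := Real.rpow_pos_of_pos hxpos _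
    exact mul_le_mul_of_nonneg_right h4 hxp.le
  have hca : Real.log 2 ≤ c - a := by
    have hsplit : c = a * x ^ (ε/2) := by
      rw [hc_def, ha_def, ← Real.rpow_add hxpos]; ring_nf
    have hpow1 : (1:ℝ) ≤ a := by
      rw [ha_def, show (1:ℝ) = 1 ^ (βx + ε/2) by simp [Real.one_rpow]]
      exact Real.rpow_le_rpow (by norm_num) h3 (by linarith)
    have hlog2 : (0:ℝ) < Real.log 2 := Real.log_pos one_lt_two
    nlinarith [hpow1, h5, hsplit]
  have hcb : c ≤ b := by
    rw [hc_def, hb_def]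
    exact Real.rpow_le_rpow_of_exponent_le h3 (by linarith)
  -- assemble
  have hA : Real.exp (-a) ≤ survival μ X (2*x) := by
    refine le_trans ?_ h1
    rw [Real.exp_le_exp]; linarith [hstep1]
  have hB : survival μ (fun ω => -Y ω) x ≤ Real.exp (-c) := by
    refine h2.trans ?_
    rw [Real.exp_le_exp]; linarith [hcb]
  have h2c : 2 * Real.exp (-c) ≤ Real.exp (-a) := by
    rw [show (2:ℝ) * Real.exp (-c) = Real.exp (Real.log 2 + -c) by
      rw [Real.exp_add, Real.exp_log two_pos]]
    rw [Real.exp_le_exp]; linarith [hca]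
  have hdiff := surv_diff_lower (μ := μ) X Y x
  linarith

lemma psi_exists (ρ : ℝ → ℝ) (u₂ : ℝ)
    (h : ∀ k : ℕ, ∃ Ck : ℝ, 0 ≤ Ck ∧ ∀ u, u₂ ≤ u → ρ u ≤ u / ((k:ℝ)+1) + Ck) :
    ∃ ψ : ℝ → ℝ, (∀ u, u₂ ≤ u → ρ u ≤ ψ u) ∧
      ∀ c : ℝ, Tendsto (fun u => ψ (u + c) - ψ u) atTop (nhds 0) := by
  choose Cf hC0 hC using h
  set ψ : ℝ → ℝ := fun u => ⨅ k : ℕ, (u / ((k:ℝ)+1) + Cf k) with hψ_def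
  have hbdd : ∀ u : ℝ, BddBelow (Set.range fun k : ℕ => u / ((k:ℝ)+1) + Cf k) := by
    intro u
    refine ⟨min u 0, ?_⟩
    rintro y ⟨k, rfl⟩
    have hk : (0:ℝ) < (k:ℝ)+1 := by positivity
    have hCk := hC0 k
    rcases le_or_gt 0 u with hu | hu
    · have : 0 ≤ u / ((k:ℝ)+1) := by positivity
      have := min_le_right u 0
      simp only []
      linarith
    · have h1 : u ≤ u / ((k:ℝ)+1) := by
        rw [le_div_iff₀ hk]
        nlinarith [Nat.cast_nonneg (α := ℝ) k]
      have := min_le_left u 0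
      simp only []
      linarith
  have hmono : ∀ u v : ℝ, u ≤ v → ψ u ≤ ψ v := by
    intro u v huv
    refine le_ciInf fun k => ?_
    refine (ciInf_le (hbdd u) k).trans ?_
    have hk : (0:ℝ) < (k:ℝ)+1 := by positivity
    have : u / ((k:ℝ)+1) ≤ v / ((k:ℝ)+1) := by gcongr
    linarith
  have hdom : ∀ u, u₂ ≤ u → ρ u ≤ ψ u := by
    intro u hu
    exact le_ciInf fun k => hC k u hu
  have hkey : ∀ (K : ℕ) (c u : ℝ), 0 ≤ c → ((K:ℝ)+1)^2 * Cf K ≤ u →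
      ψ (u + c) ≤ ψ u + c / ((K:ℝ)+1) := by
    intro K c u hc hu
    have hKpos : (0:ℝ) < (K:ℝ)+1 := by positivity
    have hu0 : 0 ≤ u := le_trans (mul_nonneg (by positivity) (hC0 K)) hu
    rw [show ψ u + c / ((K:ℝ)+1) = (⨅ k : ℕ, (u / ((k:ℝ)+1) + Cf k)) + c / ((K:ℝ)+1) from rfl]
    rw [← sub_le_iff_le_add]
    refine le_ciInf fun k => ?_
    rw [sub_le_iff_le_add]
    rcases le_or_gt K k with hk | hk
    · have hkpos : (0:ℝ) < (k:ℝ)+1 := by positivity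
      have hkK : ((K:ℝ)+1) ≤ ((k:ℝ)+1) := by
        have : (K:ℝ) ≤ (k:ℝ) := Nat.cast_le.mpr hk
        linarith
      have hdivle : c / ((k:ℝ)+1) ≤ c / ((K:ℝ)+1) := by gcongr
      calc ψ (u+c) ≤ (u+c) / ((k:ℝ)+1) + Cf k := ciInf_le (hbdd _) k
        _ = u / ((k:ℝ)+1) + Cf k + c / ((k:ℝ)+1) := by ring
        _ ≤ u / ((k:ℝ)+1) + Cf k + c / ((K:ℝ)+1) := by linarith
    · -- k < K
      have hkpos : (0:ℝ) < (k:ℝ)+1 := by positivity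
      have h1 : u / ((K:ℝ)+1) + Cf K ≤ u / ((k:ℝ)+1) := by
        have ha : ((k:ℝ)+1) + 1 ≤ (K:ℝ)+1 := by
          have : (k:ℝ)+1 ≤ (K:ℝ) := by exact_mod_cast Nat.succ_le_of_lt hk
          linarith
        have hab : (0:ℝ) < ((k:ℝ)+1) * ((K:ℝ)+1) := by positivity
        rw [div_add' _ _ _ (ne_of_gt hKpos), div_le_div_iff₀ hKpos hkpos]
        have hCK := hC0 K
        nlinarith [hu, mul_le_mul_of_nonneg_left ha hu0]
      calc ψ (u+c) ≤ (u+c) / ((K:ℝ)+1) + Cf K := ciInf_le (hbdd _) K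
        _ = (u / ((K:ℝ)+1) + Cf K) + c / ((K:ℝ)+1) := by ring
        _ ≤ u / ((k:ℝ)+1) + c / ((K:ℝ)+1) := by linarith
        _ ≤ u / ((k:ℝ)+1) + Cf k + c / ((K:ℝ)+1) := by linarith [hC0 k]
  have htend0 : ∀ c : ℝ, 0 ≤ c → Tendsto (fun u => ψ (u + c) - ψ u) atTop (nhds 0) := by
    intro c hc
    rw [Metric.tendsto_atTop]
    intro ε hε
    obtain ⟨K, hK⟩ := exists_nat_gt (c / ε)
    refine ⟨max (((K:ℝ)+1)^2 * Cf K) 0 + 1, fun u hu => ?_⟩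
    have hu1 : ((K:ℝ)+1)^2 * Cf K ≤ u := le_trans (le_trans (le_max_left _ _) (by linarith)) le_rfl
    have h1 : ψ u ≤ ψ (u + c) := hmono _ _ (by linarith)
    have h2 := hkey K c u hc hu1
    have hKpos : (0:ℝ) < (K:ℝ)+1 := by positivity
    have hlt : c / ((K:ℝ)+1) < ε := by
      rw [div_lt_iff₀ hKpos]
      have : c / ε < (K:ℝ) := hK
      rw [div_lt_iff₀ hε] at this
      nlinarith
    rw [Real.dist_eq, sub_zero, abs_of_nonneg (by linarith)]
    linarith
  refine ⟨ψ, hdom, fun c => ?_⟩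
  rcases le_or_gt 0 c with hc | hc
  · exact htend0 c hc
  · have hpos := htend0 (-c) (by linarith)
    have hcomp : Tendsto (fun u : ℝ => u + c) atTop atTop :=
      tendsto_atTop_add_const_right _ c tendsto_id
    have := (hpos.comp hcomp).neg
    rw [neg_zero] at this
    refine this.congr fun u => ?_
    simp only [Function.comp]
    have : u + c + -c = u := by ring
    rw [this]
    ring

lemma sv_of_tendsto (ψ : ℝ → ℝ)
    (h : ∀ c : ℝ, Tendsto (fun u => ψ (u + c) - ψ u) atTop (nhds 0)) :
    SlowlyVarying (fun x => Real.exp (ψ (Real.log x))) := by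
  constructor
  · intro x _; exact Real.exp_pos _
  intro t ht
  have base : Tendsto (fun x : ℝ => ψ (Real.log x + Real.log t) - ψ (Real.log x))
      atTop (nhds 0) := (h (Real.log t)).comp Real.tendsto_log_atTop
  have hexp : Tendsto (fun x : ℝ => Real.exp (ψ (Real.log x + Real.log t) - ψ (Real.log x)))
      atTop (nhds 1) := by
    have := (Real.continuous_exp.tendsto 0).comp base
    simpa [Function.comp_def] using this
  refine hexp.congr' ?_
  filter_upwards [eventually_gt_atTop (0:ℝ)] with x hx
  have hlog : Real.log (t * x) = Real.log x + Real.log t := by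
    rw [Real.log_mul (ne_of_gt ht) (ne_of_gt hx), add_comm]
  rw [Real.exp_sub, hlog]

lemma gwtpos_of_sandwich (Z : Ω → ℝ) (β : ℝ) (hβ : 0 < β) (ε₀ : ℝ) (hε₀ : 0 < ε₀)
    (hup : ∀ ε : ℝ, 0 < ε → ε < β →
      ∀ᶠ x in atTop, survival μ Z x ≤ Real.exp (-(x ^ (β - ε))))
    (hlo : ∀ ε : ℝ, 0 < ε → ε < ε₀ →
      ∀ᶠ x in atTop, Real.exp (-(x ^ (β + ε))) ≤ survival μ Z x) :
    GWTpos μ Z β := by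
  set S : ℝ → ℝ := survival μ Z with hS_def
  have hup0 := hup (β/2) (by linarith) (by linarith)
  have hlo0 := hlo (ε₀/2) (by linarith) (by linarith)
  obtain ⟨x₁', hx₁'⟩ := eventually_atTop.mp ((hup0.and hlo0).and (eventually_ge_atTop 1))
  set x₁ : ℝ := max x₁' 1 with hx₁_def
  have hx₁pos : (0:ℝ) < x₁ := lt_of_lt_of_le one_pos (le_max_right _ _)
  have hbase : ∀ x, x₁ ≤ x → 0 < S x ∧ S x < 1 ∧ x ^ (β/2) ≤ -Real.log (S x) := by
    intro x hx
    have h := hx₁' x (le_trans (le_max_left _ _) hx)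
    have hx1 : (1:ℝ) ≤ x := le_trans (le_max_right _ _) hx
    have hxpos : (0:ℝ) < x := by linarith
    have hSpos : 0 < S x := lt_of_lt_of_le (Real.exp_pos _) h.1.2
    have hxb : (0:ℝ) < x ^ (β/2) := Real.rpow_pos_of_pos hxpos _
    have h11 : S x ≤ Real.exp (-(x ^ (β/2))) := by
      have := h.1.1
      rw [show β - β/2 = β/2 by ring] at this
      exact this
    have hSlt : S x < 1 := by
      refine lt_of_le_of_lt h11 ?_
      rw [show (1:ℝ) = Real.exp 0 by simp]
      rw [Real.exp_lt_exp]
      linarith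
    refine ⟨hSpos, hSlt, ?_⟩
    have := Real.log_le_log hSpos h11
    rw [Real.log_exp] at this
    linarith
  set g : ℝ → ℝ := fun u => Real.log (-Real.log (S (Real.exp u))) with hg_def
  set u₂ : ℝ := max (Real.log x₁) 1 with hu₂_def
  have hu₂pos : (0:ℝ) < u₂ := lt_of_lt_of_le one_pos (le_max_right _ _)
  have hxofu : ∀ u, u₂ ≤ u → x₁ ≤ Real.exp u ∧ (1:ℝ) ≤ Real.exp u := by
    intro u hu
    constructor
    · calc x₁ = Real.exp (Real.log x₁) := (Real.exp_log hx₁pos).symm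
        _ ≤ Real.exp u := Real.exp_le_exp.mpr (le_trans (le_max_left _ _) hu)
    · calc (1:ℝ) = Real.exp 0 := by simp
        _ ≤ Real.exp u := Real.exp_le_exp.mpr (by linarith)
  have hgmono : ∀ u v, u₂ ≤ u → u ≤ v → g u ≤ g v := by
    intro u v hu huv
    have hxu := hxofu u hu
    have hxv := hxofu v (le_trans hu huv)
    have hbu := hbase _ hxu.1
    have hbv := hbase _ hxv.1
    have hSuv : S (Real.exp v) ≤ S (Real.exp u) :=
      surv_antitone μ Z (Real.exp_le_exp.mpr huv)
    have hlog : -Real.log (S (Real.exp u)) ≤ -Real.log (S (Real.exp v)) := by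
      have := Real.log_le_log hbv.1 hSuv
      linarith
    have hupos : 0 < -Real.log (S (Real.exp u)) := by
      have := hbu.2.2
      have hxb : (0:ℝ) < (Real.exp u) ^ (β/2) := Real.rpow_pos_of_pos (by positivity) _
      linarith
    exact Real.log_le_log hupos hlog
  -- upper bound for g (from hlo): per k
  have hgup : ∀ k : ℕ, ∃ U : ℝ, u₂ ≤ U ∧ ∀ u, U ≤ u → g u ≤ β * u + u / ((k:ℝ)+1) := by
    intro k
    set δ : ℝ := min (1/((k:ℝ)+1)) (ε₀/2) with hδ_def
    have hδpos : 0 < δ := lt_min (by positivity) (by linarith)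
    have hδ1 : δ ≤ 1/((k:ℝ)+1) := min_le_left _ _
    obtain ⟨xk', hxk'⟩ := eventually_atTop.mp (hlo δ hδpos (lt_of_le_of_lt (min_le_right _ _) (by linarith)))
    refine ⟨max u₂ (max (Real.log (max xk' 1)) 0) + 1, by linarith [le_max_left u₂ (max (Real.log (max xk' 1)) 0)], ?_⟩
    intro u hu
    have hu₂u : u₂ ≤ u := by
      have := le_max_left u₂ (max (Real.log (max xk' 1)) 0)
      linarith
    have hupos : 0 ≤ u := by linarith [hu₂pos, hu₂u]
    set x : ℝ := Real.exp u with hx_def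
    have hxpos : 0 < x := Real.exp_pos _
    have hxk : xk' ≤ x := by
      have h1 : Real.log (max xk' 1) ≤ max (Real.log (max xk' 1)) 0 := le_max_left _ _
      have h2 : max xk' 1 = Real.exp (Real.log (max xk' 1)) :=
        (Real.exp_log (lt_of_lt_of_le one_pos (le_max_right _ _))).symm
      calc xk' ≤ max xk' 1 := le_max_left _ _
        _ = Real.exp (Real.log (max xk' 1)) := h2
        _ ≤ Real.exp u := Real.exp_le_exp.mpr (by
            have := le_max_right u₂ (max (Real.log (max xk' 1)) 0)
            linarith [h1])
    have hSx := hxk' x hxk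
    have hb := hbase x (hxofu u hu₂u).1
    have hsx : -Real.log (S x) ≤ x ^ (β + δ) := by
      have := Real.log_le_log (Real.exp_pos _) hSx
      rw [Real.log_exp] at this
      linarith
    have hsxpos : 0 < -Real.log (S x) := by
      have hxb : (0:ℝ) < x ^ (β/2) := Real.rpow_pos_of_pos hxpos _
      linarith [hb.2.2]
    have : g u ≤ Real.log (x ^ (β + δ)) := by
      rw [hg_def]
      exact Real.log_le_log hsxpos hsx
    rw [Real.log_rpow hxpos, hx_def, Real.log_exp] at this
    have hδu : δ * u ≤ u / ((k:ℝ)+1) := by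
      rw [div_eq_mul_inv, mul_comm u _]
      have : δ ≤ ((k:ℝ)+1)⁻¹ := by rw [← one_div]; exact hδ1
      exact mul_le_mul_of_nonneg_right this hupos
    nlinarith [this]
  -- lower bound for g (from hup): per k
  have hglow : ∀ k : ℕ, ∃ U : ℝ, u₂ ≤ U ∧ ∀ u, U ≤ u → β * u - u / ((k:ℝ)+1) ≤ g u := by
    intro k
    set δ : ℝ := min (1/((k:ℝ)+1)) (β/2) with hδ_def
    have hδpos : 0 < δ := lt_min (by positivity) (by linarith)
    have hδ1 : δ ≤ 1/((k:ℝ)+1) := min_le_left _ _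
    obtain ⟨xk', hxk'⟩ := eventually_atTop.mp (hup δ hδpos (lt_of_le_of_lt (min_le_right _ _) (by linarith)))
    refine ⟨max u₂ (max (Real.log (max xk' 1)) 0) + 1, by linarith [le_max_left u₂ (max (Real.log (max xk' 1)) 0)], ?_⟩
    intro u hu
    have hu₂u : u₂ ≤ u := by
      have := le_max_left u₂ (max (Real.log (max xk' 1)) 0)
      linarith
    have hupos : 0 ≤ u := by linarith [hu₂pos, hu₂u]
    set x : ℝ := Real.exp u with hx_def
    have hxpos : 0 < x := Real.exp_pos _
    have hxk : xk' ≤ x := by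
      have h1 : Real.log (max xk' 1) ≤ max (Real.log (max xk' 1)) 0 := le_max_left _ _
      have h2 : max xk' 1 = Real.exp (Real.log (max xk' 1)) :=
        (Real.exp_log (lt_of_lt_of_le one_pos (le_max_right _ _))).symm
      calc xk' ≤ max xk' 1 := le_max_left _ _
        _ = Real.exp (Real.log (max xk' 1)) := h2
        _ ≤ Real.exp u := Real.exp_le_exp.mpr (by
            have := le_max_right u₂ (max (Real.log (max xk' 1)) 0)
            linarith [h1])
    have hSx := hxk' x hxk
    have hb := hbase x (hxofu u hu₂u).1
    have hsx : x ^ (β - δ) ≤ -Real.log (S x) := by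
      have := Real.log_le_log hb.1 hSx
      rw [Real.log_exp] at this
      linarith
    have hxbd : (0:ℝ) < x ^ (β - δ) := Real.rpow_pos_of_pos hxpos _
    have : Real.log (x ^ (β - δ)) ≤ g u := by
      rw [hg_def]
      exact Real.log_le_log hxbd hsx
    rw [Real.log_rpow hxpos, hx_def, Real.log_exp] at this
    have hδu : δ * u ≤ u / ((k:ℝ)+1) := by
      rw [div_eq_mul_inv, mul_comm u _]
      have hδinv : δ ≤ ((k:ℝ)+1)⁻¹ := by rw [← one_div]; exact hδ1
      exact mul_le_mul_of_nonneg_right hδinv hupos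
    nlinarith [this]
  -- build ψ₁ for ρ₁ = g - β u
  have hψ₁ : ∃ ψ : ℝ → ℝ, (∀ u, u₂ ≤ u → g u - β * u ≤ ψ u) ∧
      ∀ c : ℝ, Tendsto (fun u => ψ (u + c) - ψ u) atTop (nhds 0) := by
    apply psi_exists
    intro k
    obtain ⟨U, hUu₂, hU⟩ := hgup k
    refine ⟨max 0 (g U), le_max_left _ _, ?_⟩
    intro u hu
    rcases le_or_gt U u with h | h
    · have := hU u h
      have hk : (0:ℝ) < (k:ℝ)+1 := by positivity
      have hβu : 0 ≤ β * u := mul_nonneg hβ.le (by linarith [hu₂pos])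
      have := le_max_left (0:ℝ) (g U)
      nlinarith [hU u h, le_max_left (0:ℝ) (g U)]
    · have hgu : g u ≤ g U := hgmono u U hu h.le
      have hβu : 0 ≤ β * u := mul_nonneg hβ.le (by linarith [hu₂pos])
      have hdiv : 0 ≤ u / ((k:ℝ)+1) := div_nonneg (by linarith [hu₂pos]) (by positivity)
      have := le_max_right (0:ℝ) (g U)
      linarith
  -- build ψ₂ for ρ₂ = β u - g
  have hψ₂ : ∃ ψ : ℝ → ℝ, (∀ u, u₂ ≤ u → β * u - g u ≤ ψ u) ∧
      ∀ c : ℝ, Tendsto (fun u => ψ (u + c) - ψ u) atTop (nhds 0) := by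
    apply psi_exists
    intro k
    obtain ⟨U, hUu₂, hU⟩ := hglow k
    refine ⟨max 0 (β * U - g u₂), le_max_left _ _, ?_⟩
    intro u hu
    rcases le_or_gt U u with h | h
    · have hk : (0:ℝ) < (k:ℝ)+1 := by positivity
      have := le_max_left (0:ℝ) (β * U - g u₂)
      linarith [hU u h]
    · have hgu : g u₂ ≤ g u := hgmono u₂ u le_rfl hu
      have hβu : β * u ≤ β * U := mul_le_mul_of_nonneg_left h.le hβ.le
      have hdiv : 0 ≤ u / ((k:ℝ)+1) := div_nonneg (by linarith [hu₂pos]) (by positivity)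
      have := le_max_right (0:ℝ) (β * U - g u₂)
      linarith
  obtain ⟨ψ₁, hψ₁dom, hψ₁t⟩ := hψ₁
  obtain ⟨ψ₂, hψ₂dom, hψ₂t⟩ := hψ₂
  refine ⟨fun x => Real.exp (ψ₁ (Real.log x)), fun x => Real.exp (-ψ₂ (Real.log x)),
    sv_of_tendsto ψ₁ hψ₁t, ?_, ?_⟩
  · have : ∀ c : ℝ, Tendsto (fun u => (-ψ₂ (u + c)) - (-ψ₂ u)) atTop (nhds 0) := by
      intro c
      have := (hψ₂t c).neg
      rw [neg_zero] at this
      exact this.congr fun u => by ring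
    exact sv_of_tendsto (fun u => -ψ₂ u) this
  -- final sandwich
  filter_upwards [eventually_ge_atTop (max x₁ (Real.exp u₂))] with x hx
  have hxx₁ : x₁ ≤ x := le_trans (le_max_left _ _) hx
  have hxpos : 0 < x := lt_of_lt_of_le hx₁pos hxx₁
  have hux : u₂ ≤ Real.log x := by
    have h1 : Real.exp u₂ ≤ x := le_trans (le_max_right _ _) hx
    calc u₂ = Real.log (Real.exp u₂) := (Real.log_exp _).symm
      _ ≤ Real.log x := Real.log_le_log (Real.exp_pos _) h1
  set u : ℝ := Real.log x with hu_def
  have hexpu : Real.exp u = x := Real.exp_log hxpos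
  have hb := hbase x hxx₁
  have hsxpos : 0 < -Real.log (S x) := by
    have hxb : (0:ℝ) < x ^ (β/2) := Real.rpow_pos_of_pos hxpos _
    linarith [hb.2.2]
  have hgu : g u = Real.log (-Real.log (S x)) := by
    rw [hg_def]
    simp only []
    rw [hexpu]
  have hxβ : x ^ β = Real.exp (β * u) := by
    rw [Real.rpow_def_of_pos hxpos, hu_def]
    ring_nf
  constructor
  · -- lower bound
    have hdom := hψ₁dom u hux
    have hkey : -Real.log (S x) ≤ x ^ β * Real.exp (ψ₁ u) := by
      have h1 : -Real.log (S x) = Real.exp (g u) := by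
        rw [hgu, Real.exp_log hsxpos]
      rw [h1, hxβ, ← Real.exp_add]
      rw [Real.exp_le_exp]
      linarith
    have h2 : -(x ^ β * Real.exp (ψ₁ u)) ≤ Real.log (S x) := by linarith
    calc Real.exp (-(x ^ β * Real.exp (ψ₁ (Real.log x))))
        ≤ Real.exp (Real.log (S x)) := Real.exp_le_exp.mpr h2
      _ = S x := Real.exp_log hb.1
  · -- upper bound
    have hdom := hψ₂dom u hux
    have hkey : x ^ β * Real.exp (-ψ₂ u) ≤ -Real.log (S x) := by
      have h1 : -Real.log (S x) = Real.exp (g u) := by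
        rw [hgu, Real.exp_log hsxpos]
      rw [h1, hxβ, ← Real.exp_add]
      rw [Real.exp_le_exp]
      linarith
    have h2 : Real.log (S x) ≤ -(x ^ β * Real.exp (-ψ₂ u)) := by linarith
    calc S x = Real.exp (Real.log (S x)) := (Real.exp_log hb.1).symm
      _ ≤ Real.exp (-(x ^ β * Real.exp (-ψ₂ (Real.log x)))) := Real.exp_le_exp.mpr h2

lemma master (X Y : Ω → ℝ) (βx βy : ℝ) (hβx : 0 < βx) (hβy : 0 < βy)
    (hXr : GWTpos μ X βx) (hYr : GWTpos μ Y βy) (hYl : GWTpos μ (fun ω => -Y ω) βy)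
    (C : ℝ) (hC : 0 < C)
    (hPD1 : ∀ z : ℝ, C * (μ {ω | z ≤ Y ω}).toReal ≤ (μ {ω | 0 ≤ X ω ∧ z ≤ Y ω}).toReal) :
    GWTpos μ (fun ω => X ω + Y ω) (min βx βy) := by
  have hupgen : ∀ ε : ℝ, 0 < ε → ε < min βx βy →
      ∀ᶠ x in atTop, survival μ (fun ω => X ω + Y ω) x
        ≤ Real.exp (-(x ^ (min βx βy - ε))) :=
    fun ε hε hεβ => sumUpper X Y βx βy hβx hβy hXr hYr ε hε hεβ
  rcases le_or_gt βy βx with hc | hc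
  · have hβeq : min βx βy = βy := min_eq_right hc
    rw [hβeq]
    refine gwtpos_of_sandwich _ βy hβy 1 one_pos ?_ ?_
    · intro ε hε hεβ
      have := hupgen ε hε (by rw [hβeq]; exact hεβ)
      rw [hβeq] at this
      exact this
    · intro ε hε _
      exact sumLowerPD X Y βy hβy hYr C hC hPD1 ε hε
  · have hβeq : min βx βy = βx := min_eq_left hc.le
    rw [hβeq]
    refine gwtpos_of_sandwich _ βx hβx ((βy - βx)/2) (by linarith) ?_ ?_
    · intro ε hε hεβ
      have := hupgen ε hε (by rw [hβeq]; exact hεβ)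
      rw [hβeq] at this
      exact this
    · intro ε hε hεb
      exact sumLowerDiff X Y βx βy hβx hβy hXr hYl hc ε hε hεb

end GWTwork

/-- Sum of two (possibly dependent) generalized Weibull-tail variables on `ℝ`
satisfying the positive dependence condition is generalized Weibull-tail with parameter
the minimum of the two parameters. -/
theorem gwtReal_add_of_pd {Ω : Type*} [MeasurableSpace Ω]
    (μ : Measure Ω) [IsProbabilityMeasure μ] (X Y : Ω → ℝ) (βx βy : ℝ)
    (hβx : 0 < βx) (hβy : 0 < βy)
    (hX : GWTreal μ X βx) (hY : GWTreal μ Y βy)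
    (C : ℝ) (hC : 0 < C)
    (hPD : ∀ z : ℝ,
      C * (μ {ω | z ≤ Y ω}).toReal ≤ (μ {ω | 0 ≤ X ω ∧ z ≤ Y ω}).toReal ∧
      C * (μ {ω | Y ω ≤ z}).toReal ≤ (μ {ω | X ω ≤ 0 ∧ Y ω ≤ z}).toReal) :
    GWTreal μ (fun ω => X ω + Y ω) (min βx βy) := by
  constructor
  · exact GWTwork.master X Y βx βy hβx hβy hX.1 hY.1 hY.2 C hC (fun z => (hPD z).1)
  · have hYY : GWTpos μ (fun ω => -(fun ω' => -Y ω') ω) βy := by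
      have : (fun ω => -(fun ω' => -Y ω') ω) = Y := funext fun ω => neg_neg _
      rw [this]
      exact hY.1
    have hpd' : ∀ z : ℝ, C * (μ {ω | z ≤ -Y ω}).toReal
        ≤ (μ {ω | 0 ≤ -X ω ∧ z ≤ -Y ω}).toReal := by
      intro z
      have h2 := (hPD (-z)).2
      have e1 : {ω | z ≤ -Y ω} = {ω | Y ω ≤ -z} := by
        ext ω; simp only [Set.mem_setOf_eq]; exact le_neg
      have e2 : {ω | 0 ≤ -X ω ∧ z ≤ -Y ω} = {ω | X ω ≤ 0 ∧ Y ω ≤ -z} := by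
        ext ω
        simp only [Set.mem_setOf_eq, neg_nonneg, le_neg]
      rw [e1, e2]
      exact h2
    have h := GWTwork.master (fun ω => -X ω) (fun ω => -Y ω) βx βy hβx hβy
      hX.2 hY.2 hYY C hC hpd'
    have heq : (fun ω => (fun ω' => -X ω') ω + (fun ω' => -Y ω') ω)
        = fun ω => -(X ω + Y ω) := funext fun ω => by ring
    rw [heq] at h
    exact h
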